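/- For γ ∈ (0, 1/L_f), every element H of the approximate generalized Hessian ∂̂²F_γ(x) = { γ⁻¹(I - γ∇²f(x))(I - P(I - γ∇²f(x))) : P ∈ ∂_C(prox_{γg})(x - γ∇f(x)) } is symmetric positive semidefinite and satisfies ξ₁‖d‖² ≤ d'Hd ≤ ξ₂‖d‖² for all d, with ξ₁ = min{(1-γμ_f)μ_f, (1-γL_f)L_f} and ξ₂ = γ⁻¹(1-γμ_f). -/

import Mathlib

open scoped RealInnerProductSpace
open Filter Topology

noncomputable section

abbrev Eucl (n : ℕ) := EuclideanSpace ℝ (Fin n)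

/-- `p` is the proximal mapping of `g` with parameter `γ`:
`p x` minimizes `u ↦ g u + ‖u - x‖² / (2γ)`. -/
def IsProx {n : ℕ} (γ : ℝ) (g : Eucl n → EReal) (p : Eucl n → Eucl n) : Prop :=
  ∀ x u, g (p x) + ((‖p x - x‖ ^ 2 / (2 * γ) : ℝ) : EReal)
        ≤ g u + ((‖u - x‖ ^ 2 / (2 * γ) : ℝ) : EReal)

/-- `g` is proper, lower semicontinuous and convex (with values in `ℝ ∪ {+∞}`). -/
def ProperLscConvex {n : ℕ} (g : Eucl n → EReal) : Prop :=
  (∃ x, g x ≠ ⊤) ∧ (∀ x, g x ≠ ⊥) ∧ LowerSemicontinuous g ∧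
  (∀ x y : Eucl n, ∀ a b : ℝ, 0 ≤ a → 0 ≤ b → a + b = 1 →
    g (a • x + b • y) ≤ (a : EReal) * g x + (b : EReal) * g y)

/-- B-subdifferential (limiting Jacobian) of a mapping `T` at `x`: limits of Jacobians
along sequences of differentiability points converging to `x`. -/
def Bsubdiff {n : ℕ} (T : Eucl n → Eucl n) (x : Eucl n) : Set (Eucl n →L[ℝ] Eucl n) :=
  { H | ∃ u : ℕ → Eucl n, (∀ k, DifferentiableAt ℝ T (u k)) ∧
      Tendsto u atTop (𝓝 x) ∧ Tendsto (fun k => fderiv ℝ T (u k)) atTop (𝓝 H) }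

/-- Clarke generalized Jacobian: convex hull of the B-subdifferential. -/
def ClarkeJacobian {n : ℕ} (T : Eucl n → Eucl n) (x : Eucl n) : Set (Eucl n →L[ℝ] Eucl n) :=
  convexHull ℝ (Bsubdiff T x)

variable {n : ℕ} {γ : ℝ} {g : Eucl n → EReal} {p : Eucl n → Eucl n}

lemma prox_val_finite (hg : ProperLscConvex g) (hp : IsProx γ g p) (x : Eucl n) :
    ∃ a : ℝ, g (p x) = (a : EReal) := by
  obtain ⟨x₀, hx₀⟩ := hg.1
  have h := hp x x₀
  lift g x₀ to ℝ using ⟨hx₀, hg.2.1 x₀⟩ with b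
  have hne : g (p x) ≠ ⊤ := by
    intro htop
    rw [htop, EReal.top_add_coe, ← EReal.coe_add, top_le_iff] at h
    exact EReal.coe_ne_top _ h
  lift g (p x) to ℝ using ⟨hne, hg.2.1 (p x)⟩ with a
  exact ⟨a, rfl⟩

/-- realified prox inequality against prox values -/
lemma prox_real (hg : ProperLscConvex g) (hp : IsProx γ g p) (x z : Eucl n) :
    (g (p z)).toReal + ‖p z - z‖ ^ 2 / (2 * γ)
      ≤ (g (p x)).toReal + ‖p x - z‖ ^ 2 / (2 * γ) := by
  obtain ⟨a, ha⟩ := prox_val_finite hg hp x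
  obtain ⟨b, hb⟩ := prox_val_finite hg hp z
  have h := hp z (p x)
  rw [ha, hb, ← EReal.coe_add, ← EReal.coe_add, EReal.coe_le_coe_iff] at h
  rw [ha, hb, EReal.toReal_coe, EReal.toReal_coe]
  exact h

lemma le_of_forall_small (a c k : ℝ) (hk : 0 ≤ k)
    (h : ∀ t : ℝ, 0 < t → t ≤ 1 → a ≤ c + t * k) : a ≤ c := by
  by_contra hc
  push_neg at hc
  have hac : 0 < a - c := by linarith
  set ε := (a - c) / (2 * (k + 1)) with hε
  have hε0 : 0 < ε := by positivity
  rcases le_or_gt ε 1 with h1 | h1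
  · have := h ε hε0 h1
    have hεk : ε * k ≤ (a - c) / 2 := by
      rw [hε, div_mul_eq_mul_div, div_le_div_iff₀ (by positivity) (by norm_num)]
      nlinarith
    linarith
  · have h2 := h 1 one_pos le_rfl
    have h3 : (a - c) / (2 * (k+1)) ≤ 1 := by
      rw [div_le_one (by positivity)]; nlinarith
    linarith

lemma prox_subgrad (hγ : 0 < γ) (hg : ProperLscConvex g) (hp : IsProx γ g p) (x y : Eucl n) :
    (g (p x)).toReal - (g (p y)).toReal ≤ ⟪p x - x, p y - p x⟫ / γ := by
  obtain ⟨a, ha⟩ := prox_val_finite hg hp x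
  obtain ⟨b, hb⟩ := prox_val_finite hg hp y
  rw [ha, hb, EReal.toReal_coe, EReal.toReal_coe]
  apply le_of_forall_small _ _ (‖p y - p x‖ ^ 2 / (2 * γ)) (by positivity)
  intro t ht0 ht1
  have hconv := hg.2.2.2 (p x) (p y) (1 - t) t (by linarith) ht0.le (by ring)
  have h := hp x ((1 - t) • p x + t • p y)
  have hcomb : ((1 - t) • p x + t • p y) - x = (p x - x) + t • (p y - p x) := by
    rw [sub_smul, one_smul, smul_sub]; abel
  have hnorm : ‖((1 - t) • p x + t • p y) - x‖ ^ 2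
      = ‖p x - x‖ ^ 2 + 2 * t * ⟪p x - x, p y - p x⟫ + t ^ 2 * ‖p y - p x‖ ^ 2 := by
    rw [hcomb, ← real_inner_self_eq_norm_sq, ← real_inner_self_eq_norm_sq,
      ← real_inner_self_eq_norm_sq]
    simp only [inner_add_left, inner_add_right, inner_smul_left, inner_smul_right,
      real_inner_comm (p x - x) (p y - p x), conj_trivial]
    ring
  rw [ha, hb] at hconv
  have hconv' : g ((1 - t) • p x + t • p y) ≤ (((1 - t) * a + t * b : ℝ) : EReal) := by
    refine hconv.trans_eq ?_
    rw [EReal.coe_add, EReal.coe_mul, EReal.coe_mul]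
  have hchain : (a : EReal) + ((‖p x - x‖ ^ 2 / (2 * γ) : ℝ) : EReal)
      ≤ (((1 - t) * a + t * b : ℝ) : EReal)
        + ((‖((1 - t) • p x + t • p y) - x‖ ^ 2 / (2 * γ) : ℝ) : EReal) := by
    rw [ha] at h
    exact h.trans (add_le_add_left hconv' _)
  rw [← EReal.coe_add, ← EReal.coe_add, EReal.coe_le_coe_iff, hnorm] at hchain
  set I := ⟪p x - x, p y - p x⟫ with hI
  set N := ‖p y - p x‖ ^ 2 with hN
  have h2γ : (0:ℝ) < 2 * γ := by linarith
  have hrw : I / γ + t * (N / (2 * γ)) = (2 * I + t * N) / (2 * γ) := by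
    field_simp
  rw [hrw, le_div_iff₀ h2γ]
  have key := mul_le_mul_of_nonneg_left hchain h2γ.le
  have hexp : (2*γ) * ((1 - t) * a + t * b + (‖p x - x‖ ^ 2 + 2 * t * I + t ^ 2 * N) / (2 * γ))
      - (2*γ) * (a + ‖p x - x‖ ^ 2 / (2 * γ)) = (b - a) * t * (2*γ) + 2*t*I + t^2*N := by
    field_simp; ring
  nlinarith [key, hexp, ht0, mul_pos ht0 h2γ]

lemma prox_firm (hγ : 0 < γ) (hg : ProperLscConvex g) (hp : IsProx γ g p) (x y : Eucl n) :
    ‖p x - p y‖ ^ 2 ≤ ⟪p x - p y, x - y⟫ := by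
  have h1 := prox_subgrad hγ hg hp x y
  have h2 := prox_subgrad hγ hg hp y x
  have hsum : 0 ≤ ⟪p x - x, p y - p x⟫ / γ + ⟪p y - y, p x - p y⟫ / γ := by linarith
  have hsum' : 0 ≤ ⟪p x - x, p y - p x⟫ + ⟪p y - y, p x - p y⟫ := by
    by_contra hc
    push_neg at hc
    have := div_neg_of_neg_of_pos (by linarith : ⟪p x - x, p y - p x⟫ + ⟪p y - y, p x - p y⟫ < 0) hγ
    rw [add_div] at this
    linarith
  have hexpand : ⟪p x - x, p y - p x⟫ + ⟪p y - y, p x - p y⟫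
      = ⟪p x - p y, x - y⟫ - ‖p x - p y‖ ^ 2 := by
    rw [← real_inner_self_eq_norm_sq]
    simp only [inner_sub_left, inner_sub_right]
    have c1 := real_inner_comm (p x) (p y)
    have c2 := real_inner_comm (p x) x
    have c3 := real_inner_comm (p y) y
    have c4 := real_inner_comm (p x) y
    have c5 := real_inner_comm (p y) x
    linarith
  linarith

/-- Moreau envelope (realified). -/
def MEnv (γ : ℝ) (g : Eucl n → EReal) (p : Eucl n → Eucl n) (x : Eucl n) : ℝ :=
  (g (p x)).toReal + ‖p x - x‖ ^ 2 / (2 * γ)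

/-- potential whose gradient is the prox -/
def PhiP (γ : ℝ) (g : Eucl n → EReal) (p : Eucl n → Eucl n) (x : Eucl n) : ℝ :=
  ‖x‖ ^ 2 / 2 - γ * MEnv γ g p x

lemma phi_est (hγ : 0 < γ) (hg : ProperLscConvex g) (hp : IsProx γ g p) (y z : Eucl n) :
    0 ≤ PhiP γ g p z - PhiP γ g p y - ⟪p y, z - y⟫ ∧
    PhiP γ g p z - PhiP γ g p y - ⟪p y, z - y⟫ ≤ ‖z - y‖ ^ 2 := by
  have hhalf : ∀ D : ℝ, γ * (D / (2 * γ)) = D / 2 := by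
    intro D; field_simp
  have hub : γ * (MEnv γ g p z - MEnv γ g p y) ≤ (‖p y - z‖ ^ 2 - ‖p y - y‖ ^ 2) / 2 := by
    have h := prox_real hg hp y z
    have : MEnv γ g p z - MEnv γ g p y ≤ (‖p y - z‖ ^ 2 - ‖p y - y‖ ^ 2) / (2 * γ) := by
      unfold MEnv at *
      rw [sub_div]
      linarith
    calc γ * (MEnv γ g p z - MEnv γ g p y)
        ≤ γ * ((‖p y - z‖ ^ 2 - ‖p y - y‖ ^ 2) / (2 * γ)) := by
          exact mul_le_mul_of_nonneg_left this hγ.le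
      _ = (‖p y - z‖ ^ 2 - ‖p y - y‖ ^ 2) / 2 := hhalf _
  have hlb : -((‖p z - y‖ ^ 2 - ‖p z - z‖ ^ 2) / 2) ≤ γ * (MEnv γ g p z - MEnv γ g p y) := by
    have h := prox_real hg hp z y
    have : -((‖p z - y‖ ^ 2 - ‖p z - z‖ ^ 2) / (2 * γ)) ≤ MEnv γ g p z - MEnv γ g p y := by
      unfold MEnv at *
      rw [sub_div]
      linarith
    have h2 := mul_le_mul_of_nonneg_left this hγ.le
    rw [mul_neg, hhalf] at h2
    exact h2
  -- inner product expansions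
  have e1 : ‖p y - z‖ ^ 2 - ‖p y - y‖ ^ 2 = ‖z‖ ^ 2 - ‖y‖ ^ 2 - 2 * ⟪p y, z - y⟫ := by
    rw [← real_inner_self_eq_norm_sq, ← real_inner_self_eq_norm_sq,
      ← real_inner_self_eq_norm_sq, ← real_inner_self_eq_norm_sq]
    simp only [inner_sub_left, inner_sub_right]
    have := real_inner_comm (p y) z
    have := real_inner_comm (p y) y
    linarith
  have e2 : ‖p z - y‖ ^ 2 - ‖p z - z‖ ^ 2 = ‖y‖ ^ 2 - ‖z‖ ^ 2 - 2 * ⟪p z, y - z⟫ := by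
    rw [← real_inner_self_eq_norm_sq, ← real_inner_self_eq_norm_sq,
      ← real_inner_self_eq_norm_sq, ← real_inner_self_eq_norm_sq]
    simp only [inner_sub_left, inner_sub_right]
    have := real_inner_comm (p z) z
    have := real_inner_comm (p z) y
    linarith
  have hPhi : PhiP γ g p z - PhiP γ g p y
      = ‖z‖ ^ 2 / 2 - ‖y‖ ^ 2 / 2 - γ * (MEnv γ g p z - MEnv γ g p y) := by
    unfold PhiP; ring
  constructor
  · rw [e1] at hub
    rw [hPhi]
    linarith
  · -- upper bound : ≤ ⟪p z - p y, z - y⟫ ≤ ‖z-y‖²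
    have hip : ⟪p z - p y, z - y⟫ ≤ ‖z - y‖ ^ 2 := by
      have hfirm := prox_firm hγ hg hp z y
      have hcs := real_inner_le_norm (p z - p y) (z - y)
      nlinarith [norm_nonneg (p z - p y), norm_nonneg (z - y), sq_nonneg (‖p z - p y‖ - ‖z - y‖)]
    have hiz : ⟪p z - p y, z - y⟫ = ⟪p z, z - y⟫ - ⟪p y, z - y⟫ := by
      simp [inner_sub_left]
    have hiz2 : ⟪p z, y - z⟫ = -⟪p z, z - y⟫ := by
      rw [← inner_neg_right]; congr 1; abel
    rw [e2] at hlb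
    rw [hPhi]
    linarith

lemma phi_hasFDeriv (hγ : 0 < γ) (hg : ProperLscConvex g) (hp : IsProx γ g p) (y : Eucl n) :
    HasFDerivAt (PhiP γ g p) (InnerProductSpace.toDual ℝ (Eucl n) (p y)) y := by
  rw [hasFDerivAt_iff_isLittleO_nhds_zero]
  have bound : ∀ h : Eucl n,
      ‖PhiP γ g p (y + h) - PhiP γ g p y - ⟪p y, h⟫‖ ≤ 1 * (‖h‖ * ‖h‖) := by
    intro h
    have hz : y + h - y = h := by abel
    obtain ⟨h1, h2⟩ := phi_est hγ hg hp y (y + h)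
    rw [hz] at h1 h2
    rw [Real.norm_eq_abs, abs_of_nonneg h1, one_mul, ← sq]
    exact h2
  have hbo : (fun h : Eucl n => PhiP γ g p (y + h) - PhiP γ g p y
        - InnerProductSpace.toDual ℝ (Eucl n) (p y) h)
      =O[𝓝 0] fun h : Eucl n => ‖h‖ * ‖h‖ := by
    refine Asymptotics.IsBigO.of_bound 1 (Filter.Eventually.of_forall fun h => ?_)
    simpa [InnerProductSpace.toDual_apply_apply, Real.norm_eq_abs, abs_of_nonneg,
      mul_nonneg (norm_nonneg h) (norm_nonneg h)] using bound h
  refine hbo.trans_isLittleO ?_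
  rw [Asymptotics.isLittleO_iff]
  intro c hc
  filter_upwards [Metric.closedBall_mem_nhds (0 : Eucl n) hc] with h hh
  simp only [Metric.mem_closedBall, dist_zero_right] at hh
  rw [Real.norm_eq_abs, abs_of_nonneg (mul_nonneg (norm_nonneg h) (norm_nonneg h))]
  exact mul_le_mul_of_nonneg_right hh (norm_nonneg h)

lemma prox_fderiv_symm (hγ : 0 < γ) (hg : ProperLscConvex g) (hp : IsProx γ g p)
    (u : Eucl n) (hd : DifferentiableAt ℝ p u) :
    ∀ a b : Eucl n, ⟪fderiv ℝ p u a, b⟫ = ⟪a, fderiv ℝ p u b⟫ := by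
  intro a b
  set T := (InnerProductSpace.toDual ℝ (Eucl n)).toContinuousLinearEquiv.toContinuousLinearMap
    with hT
  have hT' : ∀ v : Eucl n, T v = InnerProductSpace.toDual ℝ (Eucl n) v := fun v => rfl
  have hderiv2 : HasFDerivAt (fun w => InnerProductSpace.toDual ℝ (Eucl n) (p w))
      (T.comp (fderiv ℝ p u)) u := by
    have := T.hasFDerivAt.comp u hd.hasFDerivAt
    exact this
  have hsym := second_derivative_symmetric
    (fun y => phi_hasFDeriv hγ hg hp y) hderiv2 a b
  have ha : ⟪fderiv ℝ p u a, b⟫ = ⟪fderiv ℝ p u b, a⟫ := by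
    simpa [T, InnerProductSpace.toDual_apply_apply] using hsym
  rw [ha, real_inner_comm]

lemma prox_fderiv_firmlin (hγ : 0 < γ) (hg : ProperLscConvex g) (hp : IsProx γ g p)
    (u : Eucl n) (hd : DifferentiableAt ℝ p u) :
    ∀ e : Eucl n, ‖fderiv ℝ p u e‖ ^ 2 ≤ ⟪fderiv ℝ p u e, e⟫ := by
  intro e
  set D := fderiv ℝ p u with hD
  have hline : HasDerivAt (fun t : ℝ => u + t • e) e 0 := by
    simpa using ((hasDerivAt_id (0:ℝ)).smul_const e).const_add u
  have hψ : HasDerivAt (fun t : ℝ => p (u + t • e)) (D e) 0 := by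
    have h0 : HasFDerivAt p D (u + (0:ℝ) • e) := by simpa using hd.hasFDerivAt
    exact h0.comp_hasDerivAt 0 hline
  rw [hasDerivAt_iff_tendsto_slope] at hψ
  set G : Eucl n → ℝ := fun v => ⟪v, e⟫ - ‖v‖ ^ 2 with hG
  have hGcont : Continuous G := by
    apply Continuous.sub
    · exact continuous_id.inner continuous_const
    · exact (continuous_norm).pow 2
  have hlim : Tendsto (fun t => G (slope (fun t : ℝ => p (u + t • e)) 0 t))
      (𝓝[≠] (0:ℝ)) (𝓝 (G (D e))) := (hGcont.tendsto _).comp hψ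
  have hev : ∀ᶠ t in 𝓝[≠] (0:ℝ), 0 ≤ G (slope (fun t : ℝ => p (u + t • e)) 0 t) := by
    refine eventually_nhdsWithin_of_forall fun t ht => ?_
    have ht : t ≠ 0 := ht
    have hfirm := prox_firm hγ hg hp (u + t • e) u
    have hxy : (u + t • e) - u = t • e := by abel
    rw [hxy] at hfirm
    have hslope : slope (fun t : ℝ => p (u + t • e)) 0 t
        = t⁻¹ • (p (u + t • e) - p u) := by
      simp [slope]
    rw [hslope]
    set Δ := p (u + t • e) - p u with hΔ
    have hi1 : ⟪t⁻¹ • Δ, e⟫ = t⁻¹ * ⟪Δ, e⟫ := real_inner_smul_left Δ e t⁻¹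
    have hi2 : ‖t⁻¹ • Δ‖ ^ 2 = (t⁻¹) ^ 2 * ‖Δ‖ ^ 2 := by
      rw [norm_smul]
      simp [mul_pow, sq_abs]
    have hi3 : ⟪Δ, t • e⟫ = t * ⟪Δ, e⟫ := real_inner_smul_right Δ e t
    rw [hi3] at hfirm
    simp only [hG, hi1, hi2]
    have ht2 : (0:ℝ) < t⁻¹ ^ 2 := by positivity
    have := mul_le_mul_of_nonneg_left hfirm ht2.le
    have hsimp : t⁻¹ ^ 2 * (t * ⟪Δ, e⟫) = t⁻¹ * ⟪Δ, e⟫ := by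
      field_simp
    rw [hsimp] at this
    linarith
  have := ge_of_tendsto hlim hev
  simpa [hG] using this

def SymFirm (n : ℕ) : Set (Eucl n →L[ℝ] Eucl n) :=
  {P | (∀ a b : Eucl n, ⟪P a, b⟫ = ⟪a, P b⟫) ∧ ∀ e : Eucl n, ‖P e‖ ^ 2 ≤ ⟪P e, e⟫}

lemma symFirm_convex (n : ℕ) : Convex ℝ (SymFirm n) := by
  intro P hP Q hQ a b ha hb hab
  have happ : ∀ v : Eucl n, (a • P + b • Q) v = a • P v + b • Q v := by
    intro v; simp
  constructor
  · intro v w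
    rw [happ, happ]
    simp only [inner_add_left, inner_add_right, real_inner_smul_left, real_inner_smul_right]
    rw [hP.1 v w, hQ.1 v w]
  · intro e
    rw [happ]
    have hcs1 := hP.2 e
    have hcs2 := hQ.2 e
    have hnorm : ‖a • P e + b • Q e‖ ≤ a * ‖P e‖ + b * ‖Q e‖ := by
      refine (norm_add_le _ _).trans ?_
      rw [norm_smul, norm_smul, Real.norm_eq_abs, Real.norm_eq_abs, abs_of_nonneg ha,
        abs_of_nonneg hb]
    have hinner : ⟪a • P e + b • Q e, e⟫ = a * ⟪P e, e⟫ + b * ⟪Q e, e⟫ := by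
      rw [inner_add_left, real_inner_smul_left, real_inner_smul_left]
    rw [hinner]
    have h1 : ‖a • P e + b • Q e‖ ^ 2 ≤ (a * ‖P e‖ + b * ‖Q e‖) ^ 2 := by
      apply sq_le_sq' _ hnorm
      have := norm_nonneg (a • P e + b • Q e)
      nlinarith [mul_nonneg ha (norm_nonneg (P e)), mul_nonneg hb (norm_nonneg (Q e))]
    nlinarith [h1, mul_le_mul_of_nonneg_left hcs1 ha, mul_le_mul_of_nonneg_left hcs2 hb,
      mul_nonneg (mul_nonneg ha hb) (sq_nonneg (‖P e‖ - ‖Q e‖)), hab]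

lemma clarke_symFirm (hγ : 0 < γ) (hg : ProperLscConvex g) (hp : IsProx γ g p) (y : Eucl n) :
    ClarkeJacobian p y ⊆ SymFirm n := by
  apply convexHull_min _ (symFirm_convex n)
  rintro P ⟨u, hdiff, -, hJ⟩
  have happ : ∀ e : Eucl n, Tendsto (fun k => fderiv ℝ p (u k) e) atTop (𝓝 (P e)) := by
    intro e
    exact ((ContinuousLinearMap.apply ℝ (Eucl n) e).continuous.tendsto P).comp hJ
  constructor
  · intro v w
    have h1 : Tendsto (fun k => ⟪fderiv ℝ p (u k) v, w⟫) atTop (𝓝 ⟪P v, w⟫) :=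
      (happ v).inner tendsto_const_nhds
    have h2 : Tendsto (fun k => ⟪fderiv ℝ p (u k) v, w⟫) atTop (𝓝 ⟪v, P w⟫) := by
      have h2' : Tendsto (fun k => ⟪(v : Eucl n), fderiv ℝ p (u k) w⟫) atTop (𝓝 ⟪v, P w⟫) :=
        tendsto_const_nhds.inner (happ w)
      refine h2'.congr fun k => ?_
      exact (prox_fderiv_symm hγ hg hp (u k) (hdiff k) v w).symm
    exact tendsto_nhds_unique h1 h2
  · intro e
    have h1 : Tendsto (fun k => ⟪fderiv ℝ p (u k) e, e⟫ - ‖fderiv ℝ p (u k) e‖ ^ 2)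
        atTop (𝓝 (⟪P e, e⟫ - ‖P e‖ ^ 2)) := by
      apply Tendsto.sub
      · exact (happ e).inner tendsto_const_nhds
      · exact ((happ e).norm).pow 2
    have h2 : ∀ᶠ k in atTop, 0 ≤ ⟪fderiv ℝ p (u k) e, e⟫ - ‖fderiv ℝ p (u k) e‖ ^ 2 :=
      Filter.Eventually.of_forall fun k =>
        sub_nonneg.mpr (prox_fderiv_firmlin hγ hg hp (u k) (hdiff k) e)
    have := ge_of_tendsto h1 h2
    linarith

lemma sym_op_sq_bound {n : ℕ} (S : Eucl n →L[ℝ] Eucl n)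
    (hs : ∀ u v : Eucl n, ⟪S u, v⟫ = ⟪u, S v⟫)
    (h0 : ∀ d : Eucl n, 0 ≤ ⟪S d, d⟫) {M : ℝ} (hM0 : 0 ≤ M)
    (hM : ∀ d : Eucl n, ⟪S d, d⟫ ≤ M * ‖d‖ ^ 2) (d : Eucl n) :
    ‖S d‖ ^ 2 ≤ M * ⟪S d, d⟫ := by
  set A1 := ⟪S d, d⟫ with hA1
  set N := ‖S d‖ ^ 2 with hN
  set A2 := ⟪S (S d), S d⟫ with hA2
  have hA1nn : 0 ≤ A1 := h0 d
  have hA2nn : 0 ≤ A2 := h0 (S d)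
  have hA2ub : A2 ≤ M * N := by
    simpa [hN, hA2] using hM (S d)
  have quad : ∀ t : ℝ, 0 ≤ A1 - 2 * t * N + t ^ 2 * A2 := by
    intro t
    have h := h0 (d - t • S d)
    have hexp : ⟪S (d - t • S d), d - t • S d⟫ = A1 - 2 * t * N + t ^ 2 * A2 := by
      rw [map_sub, map_smul]
      simp only [inner_sub_left, inner_sub_right, inner_smul_left, inner_smul_right,
        conj_trivial]
      have h1 : ⟪S (S d), d⟫ = ⟪S d, S d⟫ := hs (S d) d
      have h2 : ⟪S d, S d⟫ = N := real_inner_self_eq_norm_sq (S d)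
      rw [h1, h2]
      ring
    rw [hexp] at h
    exact h
  have hNnn : (0:ℝ) ≤ N := sq_nonneg _
  rcases eq_or_lt_of_le hNnn with hN0 | hNpos
  · calc ‖S d‖ ^ 2 = N := hN.symm
      _ = 0 := hN0.symm
      _ ≤ M * A1 := mul_nonneg hM0 hA1nn
  rcases eq_or_lt_of_le hA2nn with hA20 | hA2pos
  · exfalso
    have := quad (A1 / (2 * N) + 1)
    rw [← hA20] at this
    have h2N : (0:ℝ) < 2 * N := by linarith
    have : 0 ≤ A1 - 2 * (A1 / (2 * N) + 1) * N := by linarith [this]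
    have hid : 2 * (A1 / (2 * N) + 1) * N = A1 + 2 * N := by
      field_simp
    linarith [hid ▸ this]
  · have := quad (N / A2)
    have hkey : N ^ 2 ≤ A1 * A2 := by
      have hq : 0 ≤ A1 - 2 * (N / A2) * N + (N / A2) ^ 2 * A2 := this
      have hsimp : 2 * (N / A2) * N - (N / A2) ^ 2 * A2 = N ^ 2 / A2 := by
        field_simp
        ring
      have : N ^ 2 / A2 ≤ A1 := by linarith
      calc N ^ 2 = (N ^ 2 / A2) * A2 := by field_simp
        _ ≤ A1 * A2 := by nlinarith
    nlinarith [hkey, hA2ub, hNpos, hN, hA1nn, hM0]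

lemma sym_op_phi_bound {n : ℕ} (B : Eucl n →L[ℝ] Eucl n) {μ L γ : ℝ}
    (hs : ∀ u v : Eucl n, ⟪B u, v⟫ = ⟪u, B v⟫)
    (hμq : ∀ d : Eucl n, μ * ‖d‖ ^ 2 ≤ ⟪B d, d⟫)
    (hLq : ∀ d : Eucl n, ⟪B d, d⟫ ≤ L * ‖d‖ ^ 2)
    (hμL : μ ≤ L) (hγ : 0 < γ) (d : Eucl n) :
    min ((1 - γ * μ) * μ) ((1 - γ * L) * L) * ‖d‖ ^ 2 ≤ ⟪B d, d⟫ - γ * ‖B d‖ ^ 2 := by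
  set S : Eucl n →L[ℝ] Eucl n := B - μ • (1 : Eucl n →L[ℝ] Eucl n) with hS
  have hSapp : ∀ v : Eucl n, S v = B v - μ • v := by intro v; simp [hS]
  have hSsym : ∀ u v : Eucl n, ⟪S u, v⟫ = ⟪u, S v⟫ := by
    intro u v
    rw [hSapp, hSapp]
    simp only [inner_sub_left, inner_sub_right, real_inner_smul_left, real_inner_smul_right]
    rw [hs u v]
  have hSq : ∀ v : Eucl n, ⟪S v, v⟫ = ⟪B v, v⟫ - μ * ‖v‖ ^ 2 := by
    intro v
    rw [hSapp]
    simp only [inner_sub_left, real_inner_smul_left]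
    rw [real_inner_self_eq_norm_sq]
  have hS0 : ∀ v : Eucl n, 0 ≤ ⟪S v, v⟫ := by
    intro v; rw [hSq]; linarith [hμq v]
  have hSM : ∀ v : Eucl n, ⟪S v, v⟫ ≤ (L - μ) * ‖v‖ ^ 2 := by
    intro v; rw [hSq]; have := hLq v; nlinarith
  have hsq := sym_op_sq_bound S hSsym hS0 (by linarith) hSM d
  -- expand ‖S d‖²
  have hSd : ‖S d‖ ^ 2 = ‖B d‖ ^ 2 - 2 * μ * ⟪B d, d⟫ + μ ^ 2 * ‖d‖ ^ 2 := by
    rw [hSapp, ← real_inner_self_eq_norm_sq]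
    simp only [inner_sub_left, inner_sub_right, real_inner_smul_left, real_inner_smul_right]
    rw [real_inner_self_eq_norm_sq, real_inner_self_eq_norm_sq,
      real_inner_comm (B d) d]
    ring
  set N := ‖d‖ ^ 2 with hNd
  set A1 := ⟪B d, d⟫ with hA1d
  set K := ‖B d‖ ^ 2 with hKd
  have hKey : K ≤ (L + μ) * A1 - μ * L * N := by
    rw [hSd, hSq] at hsq
    rw [← hA1d, ← hNd] at hsq
    nlinarith [hsq]
  have hNnn : (0:ℝ) ≤ N := sq_nonneg _
  have hA1lb : μ * N ≤ A1 := by rw [hA1d, hNd]; exact hμq d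
  have hA1ub : A1 ≤ L * N := by rw [hA1d, hNd]; exact hLq d
  have hlin : (1 - γ * (L + μ)) * A1 + γ * μ * L * N ≤ A1 - γ * K := by
    nlinarith [hKey, hγ]
  rcases le_total 0 (1 - γ * (L + μ)) with hα | hα
  · calc min ((1 - γ * μ) * μ) ((1 - γ * L) * L) * N
        ≤ ((1 - γ * μ) * μ) * N := mul_le_mul_of_nonneg_right (min_le_left _ _) hNnn
      _ = (1 - γ * (L + μ)) * (μ * N) + γ * μ * L * N := by ring
      _ ≤ (1 - γ * (L + μ)) * A1 + γ * μ * L * N := by nlinarith [hα, hA1lb]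
      _ ≤ A1 - γ * K := hlin
  · calc min ((1 - γ * μ) * μ) ((1 - γ * L) * L) * N
        ≤ ((1 - γ * L) * L) * N := mul_le_mul_of_nonneg_right (min_le_right _ _) hNnn
      _ = (1 - γ * (L + μ)) * (L * N) + γ * μ * L * N := by ring
      _ ≤ (1 - γ * (L + μ)) * A1 + γ * μ * L * N := by nlinarith [hα, hA1ub]
      _ ≤ A1 - γ * K := hlin

/-- For `γ ∈ (0, 1/L_f)`, every element
`H = γ⁻¹(I - γ∇²f(x))(I - P(I - γ∇²f(x)))` with `P ∈ ∂_C(prox_{γg})(x - γ∇f(x))`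
of the approximate generalized Hessian is symmetric psd and satisfies
`ξ₁‖d‖² ≤ ⟪Hd, d⟫ ≤ ξ₂‖d‖²` with `ξ₁ = min{(1-γμ)μ, (1-γL)L}`, `ξ₂ = γ⁻¹(1-γμ)`. -/
theorem approx_hessian_bounds {n : ℕ} (f : Eucl n → ℝ) (f' : Eucl n → Eucl n)
    (f'' : Eucl n → Eucl n →L[ℝ] Eucl n)
    (g : Eucl n → EReal) (γ μ L : ℝ) (p : Eucl n → Eucl n)
    (hf2 : ContDiff ℝ 2 f)
    (hf' : ∀ x, HasGradientAt f (f' x) x)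
    (hf'' : ∀ x, HasFDerivAt f' (f'' x) x)
    (hsymm : ∀ x, ∀ u v : Eucl n, ⟪f'' x u, v⟫ = ⟪u, f'' x v⟫)
    (hμ0 : 0 ≤ μ)
    (hμ : ∀ x, ∀ d : Eucl n, μ * ‖d‖ ^ 2 ≤ ⟪f'' x d, d⟫)
    (hL : ∀ x, ∀ d : Eucl n, ⟪f'' x d, d⟫ ≤ L * ‖d‖ ^ 2)
    (hg : ProperLscConvex g)
    (hγ : 0 < γ) (hγL : γ < 1 / L)
    (hp : IsProx γ g p)
    (x : Eucl n) :
    ∀ P ∈ ClarkeJacobian p (x - γ • f' x),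
      ∀ H : Eucl n →L[ℝ] Eucl n,
        H = γ⁻¹ • ((1 - γ • f'' x).comp (1 - P.comp (1 - γ • f'' x))) →
        (∀ u v : Eucl n, ⟪H u, v⟫ = ⟪u, H v⟫) ∧
        (∀ d : Eucl n,
          min ((1 - γ * μ) * μ) ((1 - γ * L) * L) * ‖d‖ ^ 2 ≤ ⟪H d, d⟫ ∧
          ⟪H d, d⟫ ≤ γ⁻¹ * (1 - γ * μ) * ‖d‖ ^ 2) := by
  intro P hPmem H hH
  obtain ⟨hPsym, hPfirm⟩ := clarke_symFirm hγ hg hp (x - γ • f' x) hPmem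
  have hP0 : ∀ e : Eucl n, 0 ≤ ⟪P e, e⟫ := fun e => (sq_nonneg ‖P e‖).trans (hPfirm e)
  have hP1 : ∀ e : Eucl n, ⟪P e, e⟫ ≤ ‖e‖ ^ 2 := by
    intro e
    have hcs := real_inner_le_norm (P e) e
    have := hPfirm e
    nlinarith [sq_nonneg (‖P e‖ - ‖e‖), norm_nonneg (P e), norm_nonneg e]
  set A := (1 : Eucl n →L[ℝ] Eucl n) - γ • f'' x with hAdef
  have hAapp : ∀ v : Eucl n, A v = v - γ • f'' x v := by
    intro v
    simp [hAdef, ContinuousLinearMap.sub_apply, ContinuousLinearMap.one_apply,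
      ContinuousLinearMap.smul_apply]
  have hAsym : ∀ u v : Eucl n, ⟪A u, v⟫ = ⟪u, A v⟫ := by
    intro u v
    rw [hAapp, hAapp]
    simp only [inner_sub_left, inner_sub_right, real_inner_smul_left, real_inner_smul_right]
    rw [hsymm x u v]
  have hHapp : ∀ v : Eucl n, H v = γ⁻¹ • (A (v - P (A v))) := by
    intro v
    rw [hH]
    simp only [ContinuousLinearMap.smul_apply, ContinuousLinearMap.comp_apply,
      ContinuousLinearMap.sub_apply, ContinuousLinearMap.one_apply]
  have hsymH : ∀ u v : Eucl n, ⟪H u, v⟫ = ⟪u, H v⟫ := by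
    intro u v
    rw [hHapp u, hHapp v, real_inner_smul_left, real_inner_smul_right]
    congr 1
    have e1 : ⟪A (u - P (A u)), v⟫ = ⟪u, A v⟫ - ⟪P (A u), A v⟫ := by
      rw [hAsym (u - P (A u)) v, inner_sub_left]
    have e2 : ⟪u, A (v - P (A v))⟫ = ⟪A u, v⟫ - ⟪A u, P (A v)⟫ := by
      rw [← hAsym u (v - P (A v)), inner_sub_right]
    rw [e1, e2, hAsym u v, hPsym (A u) (A v)]
  refine ⟨hsymH, fun d => ?_⟩
  have hHd : ⟪H d, d⟫ = γ⁻¹ * (⟪A d, d⟫ - ⟪P (A d), A d⟫) := by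
    rw [hHapp d, real_inner_smul_left]
    congr 1
    rw [hAsym (d - P (A d)) d, inner_sub_left, real_inner_comm d (A d)]
  have hAdd : ⟪A d, d⟫ = ‖d‖ ^ 2 - γ * ⟪f'' x d, d⟫ := by
    rw [hAapp]
    simp only [inner_sub_left, real_inner_smul_left]
    rw [real_inner_self_eq_norm_sq]
  have hAd2 : ‖A d‖ ^ 2 = ‖d‖ ^ 2 - 2 * γ * ⟪f'' x d, d⟫ + γ ^ 2 * ‖f'' x d‖ ^ 2 := by
    rw [hAapp, ← real_inner_self_eq_norm_sq]
    simp only [inner_sub_left, inner_sub_right, real_inner_smul_left, real_inner_smul_right]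
    rw [real_inner_self_eq_norm_sq, real_inner_self_eq_norm_sq,
      real_inner_comm (f'' x d) d]
    ring
  constructor
  · -- lower bound
    by_cases hμL : μ ≤ L
    · have hc := sym_op_phi_bound (f'' x) (hsymm x) (hμ x) (hL x) hμL hγ d
      have hY := hP1 (A d)
      have h1 : ⟪A d, d⟫ - ‖A d‖ ^ 2 = γ * (⟪f'' x d, d⟫ - γ * ‖f'' x d‖ ^ 2) := by
        rw [hAdd, hAd2]; ring
      have h2 : γ * (⟪f'' x d, d⟫ - γ * ‖f'' x d‖ ^ 2) ≤ ⟪A d, d⟫ - ⟪P (A d), A d⟫ := by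
        rw [← h1]; linarith
      have h3 := mul_le_mul_of_nonneg_left h2 (inv_nonneg.mpr hγ.le)
      have h4 : γ⁻¹ * (γ * (⟪f'' x d, d⟫ - γ * ‖f'' x d‖ ^ 2))
          = ⟪f'' x d, d⟫ - γ * ‖f'' x d‖ ^ 2 := by
        field_simp
      rw [hHd]
      rw [h4] at h3
      linarith
    · -- degenerate: all vectors are zero
      have hall : ∀ v : Eucl n, v = 0 := by
        intro v
        by_contra hv
        have hN : 0 < ‖v‖ ^ 2 := by
          have := norm_pos_iff.mpr hv
          positivity
        have h1 := hμ x v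
        have h2 := hL x v
        push_neg at hμL
        nlinarith
      rw [hall d]
      simp
  · -- upper bound
    have hXub : ⟪A d, d⟫ - ⟪P (A d), A d⟫ ≤ (1 - γ * μ) * ‖d‖ ^ 2 := by
      rw [hAdd]
      nlinarith [hμ x d, hP0 (A d), hγ.le]
    rw [hHd]
    calc γ⁻¹ * (⟪A d, d⟫ - ⟪P (A d), A d⟫)
        ≤ γ⁻¹ * ((1 - γ * μ) * ‖d‖ ^ 2) :=
          mul_le_mul_of_nonneg_left hXub (inv_nonneg.mpr hγ.le)
      _ = γ⁻¹ * (1 - γ * μ) * ‖d‖ ^ 2 := by ring
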